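/- (Completeness condition follows from VerNE and relation elimination.) Assume: (VerNE) whenever some case test matches a trace, the security property is violated; (RelE) if r t t' and both t and t' violate the security property then ctr(t') ⊆ ctr(t). Then the Completeness verification condition holds: for any trace t and party-set S, if there exists t' with vf t' = {S}, cor t' ⊆ S, and r t t', and no S' ∈ vf t with S' ⊊ S, and S ⊆ cor t, and t violates the security property, then S ∈ vf t. -/
import Mathlib

theorem stmt11 {T P I R : Type*} [Finite I]
    (sat : T → Prop) (cor : T → Finset P) (r : T → T → Prop)
    (matchesP : I → R → T → Prop) (blame : I → R → Finset P)
    (ctr : T → Set (I × R))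
    (hctr : ∀ t, ctr t = {p : I × R | matchesP p.1 p.2 t})
    (vf : T → Set (Finset P))
    (hvf : ∀ t, vf t = {S : Finset P | ∃ i ρ, matchesP i ρ t ∧ blame i ρ = S})
    (hVerNE : ∀ t (i : I) (ρ : R), matchesP i ρ t → ¬ sat t)
    (hRelE : ∀ t t', r t t' → ¬ sat t → ¬ sat t' → ctr t' ⊆ ctr t) :
    ∀ t S, (∃ t', vf t' = {S} ∧ cor t' ⊆ S ∧ r t t') →
      (¬ ∃ S' ∈ vf t, S' ⊂ S) → S ⊆ cor t → ¬ sat t → S ∈ vf t := by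
  intro t S ⟨t', hvft', _, hr⟩ _ _ hnsat
  have hS : S ∈ vf t' := by rw [hvft']; rfl
  rw [hvf] at hS
  obtain ⟨i, ρ, hm, hb⟩ := hS
  have hnsat' := hVerNE t' i ρ hm
  have hsub := hRelE t t' hr hnsat hnsat'
  have : (i, ρ) ∈ ctr t := hsub (by rw [hctr]; exact hm)
  rw [hctr] at this
  rw [hvf]
  exact ⟨i, ρ, this, hb⟩
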